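/- For every integer n, BP(n)·(BP(n))*_i + BP(n−1)·(BP(n−1))*_i = 2·(−8·P(2n+2)·1 + Q(2n+2)·j). -/

import Mathlib

open scoped TensorProduct

noncomputable def bi : ℂ ⊗[ℝ] ℂ := Complex.I ⊗ₜ[ℝ] 1
noncomputable def bj : ℂ ⊗[ℝ] ℂ := (1 : ℂ) ⊗ₜ[ℝ] Complex.I
noncomputable def bij : ℂ ⊗[ℝ] ℂ := Complex.I ⊗ₜ[ℝ] Complex.I

/-- The bicomplex Pell number `BP n = P n + P (n+1) i + P (n+2) j + P (n+3) ij`. -/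
noncomputable def BP (P : ℤ → ℤ) (n : ℤ) : ℂ ⊗[ℝ] ℂ :=
  (P n : ℝ) • (1 : ℂ ⊗[ℝ] ℂ) + (P (n + 1) : ℝ) • bi + (P (n + 2) : ℝ) • bj +
    (P (n + 3) : ℝ) • bij

/-- The i-conjugate of the bicomplex Pell number. -/
noncomputable def BPconjI (P : ℤ → ℤ) (n : ℤ) : ℂ ⊗[ℝ] ℂ :=
  (P n : ℝ) • (1 : ℂ ⊗[ℝ] ℂ) - (P (n + 1) : ℝ) • bi + (P (n + 2) : ℝ) • bj -
    (P (n + 3) : ℝ) • bij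

lemma hii : bi * bi = -1 := by
  simp [bi, Algebra.TensorProduct.tmul_mul_tmul, Complex.I_mul_I,
    Algebra.TensorProduct.one_def, TensorProduct.neg_tmul, TensorProduct.tmul_neg]

lemma hjj : bj * bj = -1 := by
  simp [bj, Algebra.TensorProduct.tmul_mul_tmul, Complex.I_mul_I,
    Algebra.TensorProduct.one_def, TensorProduct.neg_tmul, TensorProduct.tmul_neg]

lemma hkk : bij * bij = 1 := by
  simp [bij, Algebra.TensorProduct.tmul_mul_tmul, Complex.I_mul_I,
    Algebra.TensorProduct.one_def, TensorProduct.neg_tmul, TensorProduct.tmul_neg]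

lemma hik : bi * bij = -bj := by
  simp [bi, bij, bj, Algebra.TensorProduct.tmul_mul_tmul, Complex.I_mul_I,
    TensorProduct.neg_tmul, TensorProduct.tmul_neg]

lemma mul_conj (a b c d : ℝ) :
    (a • (1 : ℂ ⊗[ℝ] ℂ) + b • bi + c • bj + d • bij) *
      (a • (1 : ℂ ⊗[ℝ] ℂ) - b • bi + c • bj - d • bij) =
    (a^2 + b^2 - c^2 - d^2) • (1 : ℂ ⊗[ℝ] ℂ) + (2*(a*c + b*d)) • bj := by
  have hsd : ∀ (r : ℝ) (x : ℂ ⊗[ℝ] ℂ), r • x = algebraMap ℝ (ℂ ⊗[ℝ] ℂ) r * x :=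
    fun r x => Algebra.smul_def r x
  simp only [hsd, map_add, map_sub, map_mul, map_pow, map_ofNat]
  set A := algebraMap ℝ (ℂ ⊗[ℝ] ℂ) a
  set B := algebraMap ℝ (ℂ ⊗[ℝ] ℂ) b
  set C := algebraMap ℝ (ℂ ⊗[ℝ] ℂ) c
  set D := algebraMap ℝ (ℂ ⊗[ℝ] ℂ) d
  linear_combination (-(B^2)) * hii + C^2 * hjj + (-(D^2)) * hkk + (-(2*B*D)) * hik

lemma pell_key (P Q : ℤ → ℤ)
    (hP : ∀ n : ℤ, P (n + 2) = 2 * P (n + 1) + P n) (hP0 : P 0 = 0) (hP1 : P 1 = 1)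
    (hQ : ∀ n : ℤ, Q (n + 2) = 2 * Q (n + 1) + Q n) (hQ0 : Q 0 = 2) (hQ1 : Q 1 = 2) :
    ∀ n : ℤ,
      P (2*n+2) = 2*P (n+1)^2 + 2*P n*P (n+1) ∧
      P (2*n+3) = P n^2 + 4*P n*P (n+1) + 5*P (n+1)^2 ∧
      Q (2*n+2) = 2*P n^2 + 4*P n*P (n+1) + 6*P (n+1)^2 ∧
      Q (2*n+3) = 2*P n^2 + 12*P n*P (n+1) + 14*P (n+1)^2 := by
  have stepUp : ∀ m : ℤ,
      (P (2*m+2) = 2*P (m+1)^2 + 2*P m*P (m+1) ∧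
       P (2*m+3) = P m^2 + 4*P m*P (m+1) + 5*P (m+1)^2 ∧
       Q (2*m+2) = 2*P m^2 + 4*P m*P (m+1) + 6*P (m+1)^2 ∧
       Q (2*m+3) = 2*P m^2 + 12*P m*P (m+1) + 14*P (m+1)^2) →
      (P (2*(m+1)+2) = 2*P (m+1+1)^2 + 2*P (m+1)*P (m+1+1) ∧
       P (2*(m+1)+3) = P (m+1)^2 + 4*P (m+1)*P (m+1+1) + 5*P (m+1+1)^2 ∧
       Q (2*(m+1)+2) = 2*P (m+1)^2 + 4*P (m+1)*P (m+1+1) + 6*P (m+1+1)^2 ∧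
       Q (2*(m+1)+3) = 2*P (m+1)^2 + 12*P (m+1)*P (m+1+1) + 14*P (m+1+1)^2) := by
    intro m ⟨ih1, ih2, ih3, ih4⟩
    have eA : P (2*m+4) = 2 * P (2*m+3) + P (2*m+2) := by
      have := hP (2*m+2)
      rw [show 2*m+2+2 = 2*m+4 by ring, show 2*m+2+1 = 2*m+3 by ring] at this
      exact this
    have eB : P (2*m+5) = 2 * P (2*m+4) + P (2*m+3) := by
      have := hP (2*m+3)
      rw [show 2*m+3+2 = 2*m+5 by ring, show 2*m+3+1 = 2*m+4 by ring] at this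
      exact this
    have fA : Q (2*m+4) = 2 * Q (2*m+3) + Q (2*m+2) := by
      have := hQ (2*m+2)
      rw [show 2*m+2+2 = 2*m+4 by ring, show 2*m+2+1 = 2*m+3 by ring] at this
      exact this
    have fB : Q (2*m+5) = 2 * Q (2*m+4) + Q (2*m+3) := by
      have := hQ (2*m+3)
      rw [show 2*m+3+2 = 2*m+5 by ring, show 2*m+3+1 = 2*m+4 by ring] at this
      exact this
    have ex : P (m+2) = 2 * P (m+1) + P m := hP m
    rw [show 2*(m+1)+2 = 2*m+4 by ring, show 2*(m+1)+3 = 2*m+5 by ring,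
      show m+1+1 = m+2 by ring]
    refine ⟨?_, ?_, ?_, ?_⟩
    · rw [eA, ih1, ih2, ex]; ring
    · rw [eB, eA, ih1, ih2, ex]; ring
    · rw [fA, ih3, ih4, ex]; ring
    · rw [fB, fA, ih3, ih4, ex]; ring
  have stepDown : ∀ m : ℤ,
      (P (2*(m+1)+2) = 2*P (m+1+1)^2 + 2*P (m+1)*P (m+1+1) ∧
       P (2*(m+1)+3) = P (m+1)^2 + 4*P (m+1)*P (m+1+1) + 5*P (m+1+1)^2 ∧
       Q (2*(m+1)+2) = 2*P (m+1)^2 + 4*P (m+1)*P (m+1+1) + 6*P (m+1+1)^2 ∧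
       Q (2*(m+1)+3) = 2*P (m+1)^2 + 12*P (m+1)*P (m+1+1) + 14*P (m+1+1)^2) →
      (P (2*m+2) = 2*P (m+1)^2 + 2*P m*P (m+1) ∧
       P (2*m+3) = P m^2 + 4*P m*P (m+1) + 5*P (m+1)^2 ∧
       Q (2*m+2) = 2*P m^2 + 4*P m*P (m+1) + 6*P (m+1)^2 ∧
       Q (2*m+3) = 2*P m^2 + 12*P m*P (m+1) + 14*P (m+1)^2) := by
    intro m ih
    rw [show 2*(m+1)+2 = 2*m+4 by ring, show 2*(m+1)+3 = 2*m+5 by ring,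
      show m+1+1 = m+2 by ring] at ih
    obtain ⟨ih1, ih2, ih3, ih4⟩ := ih
    have eA : P (2*m+4) = 2 * P (2*m+3) + P (2*m+2) := by
      have := hP (2*m+2)
      rw [show 2*m+2+2 = 2*m+4 by ring, show 2*m+2+1 = 2*m+3 by ring] at this
      exact this
    have eB : P (2*m+5) = 2 * P (2*m+4) + P (2*m+3) := by
      have := hP (2*m+3)
      rw [show 2*m+3+2 = 2*m+5 by ring, show 2*m+3+1 = 2*m+4 by ring] at this
      exact this
    have fA : Q (2*m+4) = 2 * Q (2*m+3) + Q (2*m+2) := by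
      have := hQ (2*m+2)
      rw [show 2*m+2+2 = 2*m+4 by ring, show 2*m+2+1 = 2*m+3 by ring] at this
      exact this
    have fB : Q (2*m+5) = 2 * Q (2*m+4) + Q (2*m+3) := by
      have := hQ (2*m+3)
      rw [show 2*m+3+2 = 2*m+5 by ring, show 2*m+3+1 = 2*m+4 by ring] at this
      exact this
    have ex : P (m+2) = 2 * P (m+1) + P m := hP m
    rw [ex] at ih1 ih2 ih3 ih4
    refine ⟨by linear_combination -eA + 2*eB + 5*ih1 - 2*ih2,
      by linear_combination -eB - 2*ih1 + ih2,
      by linear_combination -fA + 2*fB + 5*ih3 - 2*ih4,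
      by linear_combination -fB - 2*ih3 + ih4⟩
  have base :
      P (2*(0:ℤ)+2) = 2*P ((0:ℤ)+1)^2 + 2*P 0*P ((0:ℤ)+1) ∧
      P (2*(0:ℤ)+3) = P (0:ℤ)^2 + 4*P 0*P ((0:ℤ)+1) + 5*P ((0:ℤ)+1)^2 ∧
      Q (2*(0:ℤ)+2) = 2*P (0:ℤ)^2 + 4*P 0*P ((0:ℤ)+1) + 6*P ((0:ℤ)+1)^2 ∧
      Q (2*(0:ℤ)+3) = 2*P (0:ℤ)^2 + 12*P 0*P ((0:ℤ)+1) + 14*P ((0:ℤ)+1)^2 := by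
    have p2 : P 2 = 2 := by have := hP 0; norm_num [hP0, hP1] at this; omega
    have p3 : P 3 = 5 := by have := hP 1; norm_num [hP1, p2] at this; omega
    have q2 : Q 2 = 6 := by have := hQ 0; norm_num [hQ0, hQ1] at this; omega
    have q3 : Q 3 = 14 := by have := hQ 1; norm_num [hQ1, q2] at this; omega
    norm_num [hP0, hP1, p2, p3, q2, q3]
  intro n
  induction n using Int.induction_on with
  | zero => exact base
  | succ k ih => exact stepUp k ih
  | pred k ih =>
    have := stepDown (-(k:ℤ)-1)
    rw [show -(k:ℤ)-1+1 = -(k:ℤ) by ring] at this ⊢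
    exact this ih

theorem bicomplexPell_mul_conjI_add (P Q : ℤ → ℤ)
    (hP : ∀ n : ℤ, P (n + 2) = 2 * P (n + 1) + P n) (hP0 : P 0 = 0) (hP1 : P 1 = 1)
    (hQ : ∀ n : ℤ, Q (n + 2) = 2 * Q (n + 1) + Q n) (hQ0 : Q 0 = 2) (hQ1 : Q 1 = 2)
    (n : ℤ) :
    BP P n * BPconjI P n + BP P (n - 1) * BPconjI P (n - 1) =
      (2 : ℝ) • ((-8 * (P (2 * n + 2) : ℝ)) • (1 : ℂ ⊗[ℝ] ℂ) +
        (Q (2 * n + 2) : ℝ) • bj) := by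
  obtain ⟨k1, -, k3, -⟩ := pell_key P Q hP hP0 hP1 hQ hQ0 hQ1 n
  have h1 : P (n+1) = 2 * P n + P (n-1) := by
    have := hP (n-1)
    rwa [show n-1+2 = n+1 by ring, show n-1+1 = n by ring] at this
  have h3 : P (n+3) = 2 * P (n+2) + P (n+1) := by
    have := hP (n+1)
    rwa [show n+1+2 = n+3 by ring, show n+1+1 = n+2 by ring] at this
  have c1 : ((P (n-1) : ℤ) : ℝ) = (P (n+1) : ℝ) - 2*(P n : ℝ) := by
    have : P (n-1) = P (n+1) - 2*P n := by linarith
    exact_mod_cast this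
  have c2 : ((P (n+2) : ℤ) : ℝ) = 2*(P (n+1) : ℝ) + (P n : ℝ) := by exact_mod_cast hP n
  have c3 : ((P (n+3) : ℤ) : ℝ) = 2*(P (n+2) : ℝ) + (P (n+1) : ℝ) := by exact_mod_cast h3
  have ck1 : ((P (2*n+2) : ℤ) : ℝ) = 2*(P (n+1) : ℝ)^2 + 2*(P n : ℝ)*(P (n+1) : ℝ) := by
    exact_mod_cast k1
  have ck3 : ((Q (2*n+2) : ℤ) : ℝ) =
      2*(P n : ℝ)^2 + 4*(P n : ℝ)*(P (n+1) : ℝ) + 6*(P (n+1) : ℝ)^2 := by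
    exact_mod_cast k3
  simp only [BP, BPconjI, show n-1+1 = n by ring, show n-1+2 = n+1 by ring,
    show n-1+3 = n+2 by ring]
  rw [mul_conj, mul_conj]
  match_scalars
  · rw [ck1, c3, c2, c1]; ring
  · rw [ck3, c3, c2, c1]; ring
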